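/- arXiv:2403.01141 — 5 statements merged into one kernel-verified Lean document; each statement's English description precedes it below -/
import Mathlib

section
/- In dimension d = 1: let v : ℝ → ℝ be 1-periodic semiconcave, S satisfying Hypotheses 1–3 (continuous, coercive, diagonal-periodic, locally semiconcave, ferromagnetic, and the non-crossing condition), and u = T⁻[v]. Then for every x ∈ ℝ the set Σ₊[u](x) = argmax_y {u(y) − S(x,y)} is a singleton. -/
open Filter Topology

/-- The discrete backward Lax-Oleinik operator (dimension 1). -/
noncomputable def Tminus (S : ℝ → ℝ → ℝ) (u : ℝ → ℝ) : ℝ → ℝ :=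
  fun y => ⨅ x, (u x + S x y)

/-- The discrete forward Lax-Oleinik operator (dimension 1). -/
noncomputable def Tplus (S : ℝ → ℝ → ℝ) (u : ℝ → ℝ) : ℝ → ℝ :=
  fun x => ⨆ y, (u y - S x y)

/-- 1-periodicity. -/
def Periodic1 (u : ℝ → ℝ) : Prop := ∀ x, u (x + 1) = u x

/-- Coercivity: S(x,y) → +∞ as |x−y| → ∞. -/
def Coercive1 (S : ℝ → ℝ → ℝ) : Prop :=
  ∀ M : ℝ, ∃ R : ℝ, ∀ x y : ℝ, R ≤ |x - y| → M ≤ S x y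

/-- Diagonal periodicity: S(x+m, y+m) = S(x,y) for m ∈ ℤ. -/
def DiagPeriodic1 (S : ℝ → ℝ → ℝ) : Prop :=
  ∀ (m : ℤ) (x y : ℝ), S (x + m) (y + m) = S x y

/-- Semiconcavity with a linear modulus (dimension 1). -/
def Semiconcave1 (v : ℝ → ℝ) : Prop :=
  ∃ C : ℝ, 0 ≤ C ∧ ∀ x y θ : ℝ, θ ∈ Set.Icc (0:ℝ) 1 →
    θ * v x + (1 - θ) * v y - v (θ * x + (1 - θ) * y) ≤
      C / 2 * θ * (1 - θ) * |x - y| ^ 2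

/-- Local semiconcavity (with linear modulus) on a normed space. -/
def LocallySemiconcave {E : Type*} [NormedAddCommGroup E] [NormedSpace ℝ E]
    (f : E → ℝ) : Prop :=
  ∀ x : E, ∃ U ∈ 𝓝 x, Convex ℝ U ∧ ∃ C : ℝ, 0 ≤ C ∧
    ∀ y ∈ U, ∀ z ∈ U, ∀ θ : ℝ, θ ∈ Set.Icc (0:ℝ) 1 →
      θ * f y + (1 - θ) * f z - f (θ • y + (1 - θ) • z) ≤
        C / 2 * θ * (1 - θ) * ‖y - z‖ ^ 2

/-- The ferromagnetic property in dimension 1: S is C¹ and the maps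
`y ↦ ∂₁S(x,y)` and `x ↦ ∂₂S(x,y)` are homeomorphisms of ℝ. -/
def Ferromagnetic1 (S : ℝ → ℝ → ℝ) : Prop :=
  ContDiff ℝ 1 (fun p : ℝ × ℝ => S p.1 p.2) ∧
  (∀ x : ℝ, ∃ h : ℝ ≃ₜ ℝ, ∀ y, h y = deriv (fun t => S t y) x) ∧
  (∀ y : ℝ, ∃ h : ℝ ≃ₜ ℝ, ∀ x, h x = deriv (fun t => S x t) y)

/-- The Aubry–Le Daeron non-crossing condition. -/
def NonCrossing (S : ℝ → ℝ → ℝ) : Prop :=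
  ∀ x₁ x₂ y₁ y₂ : ℝ, (x₁ - x₂) * (y₁ - y₂) < 0 →
    S x₁ y₂ + S x₂ y₁ < S x₁ y₁ + S x₂ y₂

/- ### Auxiliary lemmas -/

lemma hasDeriv1 {S : ℝ → ℝ → ℝ} (hC : ContDiff ℝ 1 (fun p : ℝ × ℝ => S p.1 p.2)) (y z : ℝ) :
    HasDerivAt (fun t => S t y) (deriv (fun t => S t y) z) z := by
  have h1 : Differentiable ℝ (fun p : ℝ × ℝ => S p.1 p.2) := hC.differentiable one_ne_zero
  have h2 : DifferentiableAt ℝ (fun t => S t y) z :=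
    show DifferentiableAt ℝ ((fun p : ℝ × ℝ => S p.1 p.2) ∘ fun t => (id t, y)) z from
    (h1 (z, y)).comp z (differentiableAt_id.prodMk (differentiableAt_const y))
  exact h2.hasDerivAt

lemma hasDeriv2 {S : ℝ → ℝ → ℝ} (hC : ContDiff ℝ 1 (fun p : ℝ × ℝ => S p.1 p.2)) (z w : ℝ) :
    HasDerivAt (fun t => S z t) (deriv (fun t => S z t) w) w := by
  have h1 : Differentiable ℝ (fun p : ℝ × ℝ => S p.1 p.2) := hC.differentiable one_ne_zero
  have h2 : DifferentiableAt ℝ (fun t => S z t) w :=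
    (h1 (z, w)).comp w ((differentiableAt_const z).prodMk differentiableAt_id)
  exact h2.hasDerivAt

/-- A semiconcave function (with linear modulus) on `ℝ` is continuous. -/
lemma v_cont' {v : ℝ → ℝ} {C : ℝ}
    (hsc : ∀ x y θ : ℝ, θ ∈ Set.Icc (0:ℝ) 1 →
      θ * v x + (1 - θ) * v y - v (θ * x + (1 - θ) * y) ≤
        C / 2 * θ * (1 - θ) * |x - y| ^ 2) : Continuous v := by
  have hconc : ConcaveOn ℝ Set.univ (fun t => v t - C / 2 * t ^ 2) := by
    refine ⟨convex_univ, ?_⟩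
    intro p _ q _ a b ha hb hab
    have hb' : b = 1 - a := by linarith
    subst hb'
    have h := hsc p q a ⟨ha, by linarith⟩
    rw [sq_abs] at h
    have hid : C / 2 * a * (1 - a) * (p - q) ^ 2 =
        a * (C / 2 * p ^ 2) + (1 - a) * (C / 2 * q ^ 2) -
          C / 2 * (a * p + (1 - a) * q) ^ 2 := by ring
    simp only [smul_eq_mul]
    linarith [h, hid]
  have h1 : Continuous (fun t : ℝ => v t - C / 2 * t ^ 2) :=
    continuousOn_univ.mp (hconc.continuousOn isOpen_univ)
  have h2 : Continuous (fun t : ℝ => (v t - C / 2 * t ^ 2) + C / 2 * t ^ 2) :=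
    h1.add (by continuity)
  simpa using h2

/-- Slope comparison for two lower supports of a semiconcave function at a common point. -/
lemma key_slope {S : ℝ → ℝ → ℝ} {v : ℝ → ℝ} {C : ℝ}
    (hC1 : ContDiff ℝ 1 (fun p : ℝ × ℝ => S p.1 p.2))
    (hsc : ∀ x y θ : ℝ, θ ∈ Set.Icc (0:ℝ) 1 →
      θ * v x + (1 - θ) * v y - v (θ * x + (1 - θ) * y) ≤
        C / 2 * θ * (1 - θ) * |x - y| ^ 2)
    {z p q : ℝ}
    (hp : ∀ t, v z + S z p ≤ v t + S t p)
    (hq : ∀ t, v z + S z q ≤ v t + S t q) :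
    deriv (fun t => S t q) z ≤ deriv (fun t => S t p) z := by
  set a := deriv (fun t => S t p) z with ha
  set b := deriv (fun t => S t q) z with hb
  have hda : HasDerivAt (fun t => S t p) a z := hasDeriv1 hC1 p z
  have hdb : HasDerivAt (fun t => S t q) b z := hasDeriv1 hC1 q z
  set F : ℝ → ℝ := fun h => (-(S (z + h) p - S z p) - (S (z + -h) q - S z q)) / h with hF
  have key : ∀ h : ℝ, 0 < h → F h ≤ C * h := by
    intro h hh
    have h1 : v z - v (z + h) ≤ S (z + h) p - S z p := by linarith [hp (z + h)]
    have h2 : v z - v (z + -h) ≤ S (z + -h) q - S z q := by linarith [hq (z + -h)]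
    have h3 := hsc (z + h) (z + -h) (1/2) ⟨by norm_num, by norm_num⟩
    have hmid : (1:ℝ)/2 * (z + h) + (1 - 1/2) * (z + -h) = z := by ring
    rw [hmid, sq_abs] at h3
    rw [hF]
    rw [div_le_iff₀ hh]
    nlinarith [h1, h2, h3]
  have tA : Tendsto (fun h : ℝ => h⁻¹ * (S (z + h) p - S z p)) (𝓝[>] (0:ℝ)) (𝓝 a) := by
    simpa [smul_eq_mul] using hda.tendsto_slope_zero_right
  have hneg : Tendsto (fun h : ℝ => -h) (𝓝[>] (0:ℝ)) (𝓝[<] (0:ℝ)) := by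
    apply tendsto_nhdsWithin_of_tendsto_nhds_of_eventually_within
    · have : Tendsto (fun h : ℝ => -h) (𝓝 (0:ℝ)) (𝓝 (-(0:ℝ))) := continuous_neg.tendsto 0
      simpa using this.mono_left nhdsWithin_le_nhds
    · filter_upwards [self_mem_nhdsWithin] with h hh
      simpa using hh
  have tB : Tendsto (fun h : ℝ => (-h)⁻¹ * (S (z + -h) q - S z q)) (𝓝[>] (0:ℝ)) (𝓝 b) := by
    have := (hdb.tendsto_slope_zero_left).comp hneg
    simpa [smul_eq_mul, Function.comp_def] using this
  have tF : Tendsto F (𝓝[>] (0:ℝ)) (𝓝 (b - a)) := by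
    have : Tendsto (fun h : ℝ => (-h)⁻¹ * (S (z + -h) q - S z q)
        - h⁻¹ * (S (z + h) p - S z p)) (𝓝[>] (0:ℝ)) (𝓝 (b - a)) := tB.sub tA
    refine this.congr fun h => ?_
    rw [hF]
    simp only [inv_neg]
    ring
  have tC : Tendsto (fun h : ℝ => C * h) (𝓝[>] (0:ℝ)) (𝓝 0) := by
    have : Tendsto (fun h : ℝ => C * h) (𝓝 (0:ℝ)) (𝓝 (C * 0)) :=
      (continuous_const.mul continuous_id).tendsto 0
    simpa using this.mono_left nhdsWithin_le_nhds
  have hba : b - a ≤ 0 := by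
    refine le_of_tendsto_of_tendsto tF tC ?_
    filter_upwards [self_mem_nhdsWithin] with h hh
    exact key h hh
  linarith

/-- Injectivity of the backward minimizing correspondence for a semiconcave `v`. -/
lemma key_inj {S : ℝ → ℝ → ℝ} {v : ℝ → ℝ}
    (hfer : Ferromagnetic1 S) (hv : Semiconcave1 v)
    {z p q : ℝ}
    (hp : ∀ t, v z + S z p ≤ v t + S t p)
    (hq : ∀ t, v z + S z q ≤ v t + S t q) : p = q := by
  obtain ⟨C, _, hsc⟩ := hv
  obtain ⟨hom, hhom⟩ := hfer.2.1 z
  have h1 : deriv (fun t => S t q) z ≤ deriv (fun t => S t p) z :=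
    key_slope hfer.1 hsc hp hq
  have h2 : deriv (fun t => S t p) z ≤ deriv (fun t => S t q) z :=
    key_slope hfer.1 hsc hq hp
  have : hom p = hom q := by rw [hhom, hhom]; linarith
  exact hom.injective this

/-- For u = T⁻[v] with v periodic semiconcave, the optimal forward map is single-valued. -/
theorem optimal_forward_map_singleton (S : ℝ → ℝ → ℝ)
    (hS : Continuous fun p : ℝ × ℝ => S p.1 p.2)
    (hco : Coercive1 S) (hdp : DiagPeriodic1 S)
    (hlsc : LocallySemiconcave fun p : ℝ × ℝ => S p.1 p.2)
    (hfer : Ferromagnetic1 S) (hnc : NonCrossing S)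
    (v u : ℝ → ℝ) (hvp : Periodic1 v) (hv : Semiconcave1 v)
    (hu : u = Tminus S v) :
    ∀ x : ℝ, ∃! y : ℝ, ∀ z, u z - S x z ≤ u y - S x y := by
  subst hu
  set u := Tminus S v with hudef
  obtain ⟨C, hC0, hsc⟩ := hv
  have hvc : Continuous v := v_cont' hsc
  have hper : Function.Periodic v 1 := hvp
  have hIcc01 : (Set.Icc (0:ℝ) 1).Nonempty := ⟨0, Set.mem_Icc.mpr ⟨le_rfl, zero_le_one⟩⟩
  obtain ⟨zlo, hzloK, hzlo⟩ := isCompact_Icc.exists_isMinOn hIcc01 hvc.continuousOn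
  obtain ⟨zhi, hzhiK, hzhi⟩ := isCompact_Icc.exists_isMaxOn hIcc01 hvc.continuousOn
  have hvlo : ∀ t, v zlo ≤ v t := by
    intro t
    obtain ⟨y, hy, hty⟩ := hper.exists_mem_Ico₀ one_pos t
    rw [hty]
    exact isMinOn_iff.mp hzlo y (Set.Ico_subset_Icc_self hy)
  have hvhi : ∀ t, v t ≤ v zhi := by
    intro t
    obtain ⟨y, hy, hty⟩ := hper.exists_mem_Ico₀ one_pos t
    rw [hty]
    exact isMaxOn_iff.mp hzhi y (Set.Ico_subset_Icc_self hy)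
  -- diagonal bound
  have hdiagc : Continuous (fun t : ℝ => S t t) :=
    hS.comp (continuous_id.prodMk continuous_id)
  obtain ⟨dm, hdmK, hdm⟩ := isCompact_Icc.exists_isMaxOn hIcc01 hdiagc.continuousOn
  have hSdiag : ∀ t : ℝ, S t t ≤ S dm dm := by
    intro t
    have h1 := hdp ⌊t⌋ (Int.fract t) (Int.fract t)
    rw [Int.fract_add_floor] at h1
    rw [h1]
    exact isMaxOn_iff.mp hdm _
      (Set.mem_Icc.mpr ⟨Int.fract_nonneg t, (Int.fract_lt_one t).le⟩)
  -- uniform existence of backward minimizers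
  obtain ⟨R0, hR0⟩ := hco (v zhi + S dm dm - v zlo + 1)
  set R := max R0 1 with hRdef
  have hR1 : (1:ℝ) ≤ R := le_max_right _ _
  have hmin : ∀ y : ℝ, ∃ z ∈ Set.Icc (y - R) (y + R), ∀ t, v z + S z y ≤ v t + S t y := by
    intro y
    have hyK : y ∈ Set.Icc (y - R) (y + R) := Set.mem_Icc.mpr ⟨by linarith, by linarith⟩
    have hcont : Continuous (fun t => v t + S t y) :=
      hvc.add (hS.comp (continuous_id.prodMk continuous_const))
    obtain ⟨z, hzK, hz⟩ := isCompact_Icc.exists_isMinOn ⟨y, hyK⟩ hcont.continuousOn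
    refine ⟨z, hzK, fun t => ?_⟩
    by_cases ht : t ∈ Set.Icc (y - R) (y + R)
    · exact isMinOn_iff.mp hz t ht
    · have habs : R ≤ |t - y| := by
        rw [Set.mem_Icc, not_and_or] at ht
        rcases ht with ht | ht
        · push_neg at ht; rw [le_abs]; right; linarith
        · push_neg at ht; rw [le_abs]; left; linarith
      have hSty := hR0 t y (le_trans (le_max_left _ _) habs)
      have hb1 : v y + S y y ≤ v zhi + S dm dm := add_le_add (hvhi y) (hSdiag y)
      have h2 := isMinOn_iff.mp hz y hyK
      have h3 := hvlo t
      linarith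
  have hbdd : ∀ y : ℝ, BddBelow (Set.range fun t => v t + S t y) := by
    intro y; obtain ⟨z, _, hz⟩ := hmin y
    exact ⟨v z + S z y, by rintro w ⟨t, rfl⟩; exact hz t⟩
  have hule : ∀ y t : ℝ, u y ≤ v t + S t y := fun y t => ciInf_le (hbdd y) t
  have huval : ∀ y z : ℝ, (∀ t, v z + S z y ≤ v t + S t y) → u y = v z + S z y :=
    fun y z hz => le_antisymm (hule y z) (le_ciInf hz)
  -- continuity of u
  have hucont : Continuous u := by
    rw [continuous_iff_continuousAt]
    intro y₀
    rw [Metric.continuousAt_iff]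
    intro ε hε
    set K2 := (Set.Icc (y₀ - R - 1) (y₀ + R + 1)) ×ˢ (Set.Icc (y₀ - 1) (y₀ + 1)) with hK2def
    have hK2 : IsCompact K2 := isCompact_Icc.prod isCompact_Icc
    have huc := hK2.uniformContinuousOn_of_continuous hS.continuousOn
    rw [Metric.uniformContinuousOn_iff] at huc
    obtain ⟨δ, hδ, hδ'⟩ := huc (ε / 2) (by linarith)
    refine ⟨min δ 1, lt_min hδ one_pos, fun y hy => ?_⟩
    have hyδ : dist y y₀ < δ := lt_of_lt_of_le hy (min_le_left _ _)
    have hy1 : |y - y₀| ≤ 1 := by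
      have h := lt_of_lt_of_le hy (min_le_right _ _)
      rw [Real.dist_eq] at h; linarith
    obtain ⟨hyA, hyB⟩ := abs_le.mp hy1
    obtain ⟨z, hzK, hz⟩ := hmin y
    obtain ⟨z₀, hz₀K, hz₀⟩ := hmin y₀
    rw [Set.mem_Icc] at hzK hz₀K
    have hmz1 : ((z, y) : ℝ × ℝ) ∈ K2 :=
      Set.mem_prod.mpr ⟨Set.mem_Icc.mpr ⟨by linarith [hzK.1], by linarith [hzK.2]⟩,
        Set.mem_Icc.mpr ⟨by linarith, by linarith⟩⟩
    have hmz2 : ((z, y₀) : ℝ × ℝ) ∈ K2 :=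
      Set.mem_prod.mpr ⟨Set.mem_Icc.mpr ⟨by linarith [hzK.1], by linarith [hzK.2]⟩,
        Set.mem_Icc.mpr ⟨by linarith, by linarith⟩⟩
    have hmz3 : ((z₀, y) : ℝ × ℝ) ∈ K2 :=
      Set.mem_prod.mpr ⟨Set.mem_Icc.mpr ⟨by linarith [hz₀K.1], by linarith [hz₀K.2]⟩,
        Set.mem_Icc.mpr ⟨by linarith, by linarith⟩⟩
    have hmz4 : ((z₀, y₀) : ℝ × ℝ) ∈ K2 :=
      Set.mem_prod.mpr ⟨Set.mem_Icc.mpr ⟨by linarith [hz₀K.1], by linarith [hz₀K.2]⟩,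
        Set.mem_Icc.mpr ⟨by linarith, by linarith⟩⟩
    have hdd : ∀ w : ℝ, dist ((w, y) : ℝ × ℝ) ((w, y₀) : ℝ × ℝ) < δ := by
      intro w
      rw [Prod.dist_eq, dist_self, max_eq_right dist_nonneg]
      exact hyδ
    have e1 := hδ' _ hmz3 _ hmz4 (hdd z₀)
    have e2 := hδ' _ hmz1 _ hmz2 (hdd z)
    rw [Real.dist_eq] at e1 e2 ⊢
    obtain ⟨e1a, e1b⟩ := abs_lt.mp e1
    obtain ⟨e2a, e2b⟩ := abs_lt.mp e2
    have q1 : u y - u y₀ ≤ S z₀ y - S z₀ y₀ := by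
      have l1 := hule y z₀
      have l2 := huval y₀ z₀ hz₀
      linarith
    have q2 : u y₀ - u y ≤ S z y₀ - S z y := by
      have l1 := hule y₀ z
      have l2 := huval y z hz
      linarith
    rw [abs_lt]
    constructor <;> [linarith; linarith]
  -- main statement
  intro x
  have hSx : ∀ w : ℝ, Continuous fun t => S w t :=
    fun w => hS.comp (continuous_const.prodMk continuous_id)
  have hSfst : ∀ w : ℝ, Continuous fun t => S t w :=
    fun w => hS.comp (continuous_id.prodMk continuous_const)
  have hfc : Continuous fun t => u t - S x t := hucont.sub (hSx x)
  have hub : ∀ t, u t ≤ v zhi + S dm dm :=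
    fun t => (hule t t).trans (add_le_add (hvhi t) (hSdiag t))
  obtain ⟨R1, hR1'⟩ := hco (v zhi + S dm dm - (u x - S x x) + 1)
  set R2 := max R1 0 with hR2def
  have hR2nn : (0:ℝ) ≤ R2 := le_max_right _ _
  have hxK : x ∈ Set.Icc (x - R2) (x + R2) := Set.mem_Icc.mpr ⟨by linarith, by linarith⟩
  obtain ⟨y, hyK, hy⟩ := isCompact_Icc.exists_isMaxOn ⟨x, hxK⟩ hfc.continuousOn
  have hymax : ∀ t, u t - S x t ≤ u y - S x y := by
    intro t
    by_cases ht : t ∈ Set.Icc (x - R2) (x + R2)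
    · exact isMaxOn_iff.mp hy t ht
    · have habs : R1 ≤ |x - t| := by
        rw [Set.mem_Icc, not_and_or] at ht
        have h0 : R1 ≤ R2 := le_max_left _ _
        rcases ht with ht | ht
        · push_neg at ht; rw [le_abs]; left; linarith
        · push_neg at ht; rw [le_abs]; right; linarith
      have h1 := hR1' x t habs
      have h2 := hub t
      have h3 := isMaxOn_iff.mp hy x hxK
      linarith
  refine ⟨y, hymax, ?_⟩
  -- uniqueness
  have huniq : ∀ a b : ℝ, (∀ t, u t - S x t ≤ u a - S x a) →
      (∀ t, u t - S x t ≤ u b - S x b) → a < b → False := by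
    intro a b hA hB hab
    have hMb : u b - S x b = u a - S x a := le_antisymm (hA b) (hB a)
    obtain ⟨w₀, hw₀K, hw₀⟩ :=
      isCompact_Icc.exists_isMinOn ⟨a, Set.left_mem_Icc.mpr hab.le⟩ hfc.continuousOn
    have star : ∀ w, w ∈ Set.Ioo a b → (∀ t ∈ Set.Icc a b, u w - S x w ≤ u t - S x t) →
        (∀ t, v x + S x w ≤ v t + S t w) ∧ v x + S x w = u w := by
      intro w hw hwmin
      obtain ⟨z, hzK, hz⟩ := hmin w
      have huw : u w = v z + S z w := huval w z hz
      have hloc : IsLocalMin (fun t => S z t - S x t) w := by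
        refine Filter.eventually_of_mem (Ioo_mem_nhds hw.1 hw.2) fun t ht => ?_
        have l1 : u t ≤ v z + S z t := hule t z
        have l2 : u w - S x w ≤ u t - S x t := hwmin t (Set.Ioo_subset_Icc_self ht)
        simp only
        linarith
      have hder : HasDerivAt (fun t => S z t - S x t)
          (deriv (fun t => S z t) w - deriv (fun t => S x t) w) w :=
        (hasDeriv2 hfer.1 z w).sub (hasDeriv2 hfer.1 x w)
      have hzero := hloc.hasDerivAt_eq_zero hder
      obtain ⟨hom, hhom⟩ := hfer.2.2 w
      have hzx : z = x := hom.injective (by rw [hhom, hhom]; linarith)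
      rw [hzx] at hz huw
      exact ⟨hz, huw.symm⟩
    by_cases hcase : u w₀ - S x w₀ = u a - S x a
    · -- f is constant on [a,b] : two interior points give a contradiction
      have hconst : ∀ t ∈ Set.Icc a b, u t - S x t = u a - S x a := by
        intro t ht
        refine le_antisymm (hA t) ?_
        rw [← hcase]
        exact isMinOn_iff.mp hw₀ t ht
      set w1 := a + (b - a) / 3 with hw1def
      set w2 := a + 2 * (b - a) / 3 with hw2def
      have hw1m : w1 ∈ Set.Ioo a b := Set.mem_Ioo.mpr ⟨by rw [hw1def]; linarith,
        by rw [hw1def]; linarith⟩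
      have hw2m : w2 ∈ Set.Ioo a b := Set.mem_Ioo.mpr ⟨by rw [hw2def]; linarith,
        by rw [hw2def]; linarith⟩
      have s1 := star w1 hw1m (fun t ht => by
        rw [hconst w1 (Set.Ioo_subset_Icc_self hw1m), hconst t ht])
      have s2 := star w2 hw2m (fun t ht => by
        rw [hconst w2 (Set.Ioo_subset_Icc_self hw2m), hconst t ht])
      have hne : w1 = w2 := key_inj hfer ⟨C, hC0, hsc⟩ s1.1 s2.1
      rw [hw1def, hw2def] at hne
      linarith
    · -- strict interior minimum : value contradiction
      have hmle : u w₀ - S x w₀ ≤ u a - S x a := hA w₀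
      have hmlt : u w₀ - S x w₀ < u a - S x a := lt_of_le_of_ne hmle hcase
      rw [Set.mem_Icc] at hw₀K
      have hw₀a : w₀ ≠ a := by intro h; rw [h] at hmlt; exact lt_irrefl _ hmlt
      have hw₀b : w₀ ≠ b := by intro h; rw [h, hMb] at hmlt; exact lt_irrefl _ hmlt
      have hw₀m : w₀ ∈ Set.Ioo a b :=
        Set.mem_Ioo.mpr ⟨lt_of_le_of_ne hw₀K.1 (Ne.symm hw₀a), lt_of_le_of_ne hw₀K.2 hw₀b⟩
      obtain ⟨hsupp, heq⟩ := star w₀ hw₀m (fun t ht => isMinOn_iff.mp hw₀ t ht)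
      have h1 : u a ≤ v x + S x a := hule a x
      linarith
  intro y' hy'
  rcases lt_trichotomy y' y with h | h | h
  · exact (huniq y' y hy' hymax h).elim
  · exact h
  · exact (huniq y y' hymax hy' h).elim
end

section
/- In dimension 1, under Hypotheses 1–3: if u = T⁻[v] with v : ℝ → ℝ 1-periodic semiconcave, then the optimal forward map Σ₊[u] : ℝ → ℝ is a single-valued, continuous, non-decreasing function satisfying Σ₊[u](x+1) = Σ₊[u](x) + 1; i.e., it is a lift of a degree-one circle map. -/
open Filter Topology

/-- semiconcave implies continuous -/
lemma aux_semiconcave_cont {v : ℝ → ℝ} (hv : Semiconcave1 v) : Continuous v := by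
  obtain ⟨C, hC0, hC⟩ := hv
  have hconv : ConvexOn ℝ Set.univ (fun z => C / 2 * z ^ 2 - v z) := by
    refine ⟨convex_univ, fun x _ y _ a b ha hb hab => ?_⟩
    have h := hC x y a ⟨ha, by linarith⟩
    have hb' : b = 1 - a := by linarith
    subst hb'
    have habs : |x - y| ^ 2 = (x - y) ^ 2 := sq_abs _
    rw [habs] at h
    simp only [smul_eq_mul]
    nlinarith [h]
  have : Continuous (fun z : ℝ => C / 2 * z ^ 2 - v z) :=
    hconv.locallyLipschitz.continuous
  have h2 : Continuous (fun z : ℝ => C / 2 * z ^ 2 - (C / 2 * z ^ 2 - v z)) :=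
    (continuous_const.mul (continuous_pow 2)).sub this
  convert h2 using 1; funext z; ring

/-- continuous periodic implies bounded -/
lemma aux_periodic_bounds {f : ℝ → ℝ} (hf : Continuous f) (hp : Periodic1 f) :
    ∃ m M : ℝ, ∀ x, m ≤ f x ∧ f x ≤ M := by
  have hp' : Function.Periodic f 1 := hp
  have hK : IsCompact (Set.Icc (0:ℝ) 1) := isCompact_Icc
  obtain ⟨a, ha, hamin⟩ := hK.exists_isMinOn ⟨0, by norm_num⟩ hf.continuousOn
  obtain ⟨b, hb, hbmax⟩ := hK.exists_isMaxOn ⟨0, by norm_num⟩ hf.continuousOn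
  refine ⟨f a, f b, fun x => ?_⟩
  have hx : f x = f (x - ⌊x⌋) := by
    have := hp'.sub_int_mul_eq (x := x) ⌊x⌋
    rw [mul_one] at this; exact this.symm
  have hmem : x - ⌊x⌋ ∈ Set.Icc (0:ℝ) 1 := by
    constructor
    · linarith [Int.floor_le x]
    · linarith [Int.lt_floor_add_one x]
  rw [hx]
  exact ⟨hamin hmem, hbmax hmem⟩

/-- bounds of S on diagonal strips -/
lemma aux_strip_bounds {S : ℝ → ℝ → ℝ} (hS : Continuous fun p : ℝ × ℝ => S p.1 p.2)
    (hdp : DiagPeriodic1 S) (r : ℝ) :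
    ∃ A B : ℝ, ∀ x y : ℝ, |x - y| ≤ r → B ≤ S x y ∧ S x y ≤ A := by
  rcases lt_or_ge r 0 with hr | hr
  · exact ⟨0, 0, fun x y h => absurd (lt_of_le_of_lt h hr) (not_lt.2 (abs_nonneg _))⟩
  have hK : IsCompact ((Set.Icc (0:ℝ) 1) ×ˢ (Set.Icc (-r) (r+1))) :=
    isCompact_Icc.prod isCompact_Icc
  have hne : ((Set.Icc (0:ℝ) 1) ×ˢ (Set.Icc (-r) (r+1))).Nonempty := by
    refine ⟨(0, 0), ?_, ?_⟩ <;> constructor <;> norm_num <;> linarith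
  obtain ⟨p, hp, hpmin⟩ := hK.exists_isMinOn hne hS.continuousOn
  obtain ⟨q, hq, hqmax⟩ := hK.exists_isMaxOn hne hS.continuousOn
  refine ⟨S q.1 q.2, S p.1 p.2, fun x y h => ?_⟩
  have hx1 : x - (⌊x⌋:ℝ) ∈ Set.Icc (0:ℝ) 1 :=
    ⟨by linarith [Int.floor_le x], by linarith [Int.lt_floor_add_one x]⟩
  have hy1 : y - (⌊x⌋:ℝ) ∈ Set.Icc (-r) (r+1) := by
    rw [abs_le] at h
    constructor <;> [skip; skip] <;>
      nlinarith [Int.floor_le x, Int.lt_floor_add_one x, h.1, h.2]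
  have heq : S x y = S (x - ⌊x⌋) (y - ⌊x⌋) := by
    conv_lhs => rw [← sub_add_cancel x (⌊x⌋:ℝ), ← sub_add_cancel y (⌊x⌋:ℝ)]
    exact hdp ⌊x⌋ _ _
  rw [heq]
  exact ⟨hpmin (Set.mk_mem_prod hx1 hy1), hqmax (Set.mk_mem_prod hx1 hy1)⟩

/-- The optimal forward map of u = T⁻[v] is a single-valued continuous
non-decreasing lift of a degree-one circle map. -/
theorem optimal_forward_map_lift (S : ℝ → ℝ → ℝ)
    (hS : Continuous fun p : ℝ × ℝ => S p.1 p.2)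
    (hco : Coercive1 S) (hdp : DiagPeriodic1 S)
    (hlsc : LocallySemiconcave fun p : ℝ × ℝ => S p.1 p.2)
    (hfer : Ferromagnetic1 S) (hnc : NonCrossing S)
    (v u : ℝ → ℝ) (hvp : Periodic1 v) (hv : Semiconcave1 v)
    (hu : u = Tminus S v) :
    ∃ σ : ℝ → ℝ,
      (∀ x z, u z - S x z ≤ u (σ x) - S x (σ x)) ∧
      (∀ x y, (∀ z, u z - S x z ≤ u y - S x y) → y = σ x) ∧
      Continuous σ ∧ Monotone σ ∧ ∀ x, σ (x + 1) = σ x + 1 := by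
  subst hu
  set u : ℝ → ℝ := Tminus S v with hu
  have hSx : ∀ y : ℝ, Continuous fun x => S x y :=
    fun y => hS.comp (continuous_id.prodMk continuous_const)
  have hSy : ∀ x : ℝ, Continuous fun y => S x y :=
    fun x => hS.comp (continuous_const.prodMk continuous_id)
  have hvc : Continuous v := aux_semiconcave_cont hv
  obtain ⟨mv, Mv, hvb⟩ := aux_periodic_bounds hvc hvp
  obtain ⟨A0, B0, hA0⟩ := aux_strip_bounds hS hdp 0
  obtain ⟨B, hB⟩ : ∃ B : ℝ, ∀ x y : ℝ, B ≤ S x y := by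
    obtain ⟨R0, hR0⟩ := hco 0
    obtain ⟨A1, B1, h1⟩ := aux_strip_bounds hS hdp |R0|
    refine ⟨min B1 0, fun x y => ?_⟩
    rcases le_total |x - y| |R0| with h | h
    · exact le_trans (min_le_left _ _) (h1 x y h).1
    · exact le_trans (min_le_right _ _) (hR0 x y (le_trans (le_abs_self R0) h))
  have hbdd : ∀ w : ℝ, BddBelow (Set.range fun x => v x + S x w) := by
    intro w
    exact ⟨mv + B, by rintro c ⟨x, rfl⟩; exact add_le_add (hvb x).1 (hB x w)⟩
  have hUle : ∀ z w : ℝ, u w ≤ v z + S z w := fun z w => ciInf_le (hbdd w) z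
  have hUub : ∀ w : ℝ, u w ≤ Mv + A0 := fun w =>
    (hUle w w).trans (add_le_add (hvb w).2 (hA0 w w (by simp)).2)
  -- uniform minimizers
  obtain ⟨R1, hR1⟩ := hco (Mv + A0 - mv + 1)
  set Rm : ℝ := |R1| with hRm
  have hRm0 : 0 ≤ Rm := abs_nonneg R1
  have hmin : ∀ w : ℝ, ∃ z : ℝ, |z - w| ≤ Rm ∧ ∀ x, v z + S z w ≤ v x + S x w := by
    intro w
    have hK : IsCompact (Set.Icc (w - Rm) (w + Rm)) := isCompact_Icc
    have hwK : w ∈ Set.Icc (w - Rm) (w + Rm) := ⟨by linarith, by linarith⟩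
    obtain ⟨z, hz, hzmin⟩ := hK.exists_isMinOn ⟨w, hwK⟩
      ((hvc.add (hSx w)).continuousOn)
    refine ⟨z, by rw [abs_sub_le_iff]; exact ⟨by linarith [hz.2], by linarith [hz.1]⟩,
      fun x => ?_⟩
    rcases le_or_gt |x - w| Rm with hx | hx
    · refine hzmin ?_
      rw [abs_sub_le_iff] at hx
      exact ⟨by linarith [hx.2], by linarith [hx.1]⟩
    · have h1 : Mv + A0 - mv + 1 ≤ S x w := by
        refine hR1 x w (le_trans (le_abs_self R1) ?_)
        rw [hRm] at hx; exact hx.le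
      have h2 : v z + S z w ≤ v w + S w w := hzmin hwK
      have h3 : v w + S w w ≤ Mv + A0 := add_le_add (hvb w).2 (hA0 w w (by simp)).2
      have h4 := (hvb x).1
      linarith
  have hmin_eq : ∀ w z : ℝ, (∀ x, v z + S z w ≤ v x + S x w) → u w = v z + S z w :=
    fun w z hz => le_antisymm (hUle z w) (le_ciInf hz)
  -- translation identity and periodicity of u
  have hkey : ∀ x w : ℝ, v (x + 1) + S (x + 1) (w + 1) = v x + S x w := by
    intro x w
    have h := hdp 1 x w
    push_cast at h
    rw [hvp x, h]
  have hup : ∀ w : ℝ, u (w + 1) = u w := by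
    intro w
    apply le_antisymm
    · refine le_ciInf fun x => ?_
      calc u (w + 1) ≤ v (x + 1) + S (x + 1) (w + 1) := hUle (x + 1) (w + 1)
        _ = v x + S x w := hkey x w
    · refine le_ciInf fun t => ?_
      have h := hkey (t - 1) w
      rw [sub_add_cancel] at h
      calc u w ≤ v (t - 1) + S (t - 1) w := hUle (t - 1) w
        _ = v t + S t (w + 1) := h.symm
  -- continuity of u
  have huc : Continuous u := by
    rw [Metric.continuous_iff]
    intro y₀ ε hε
    set K2 := (Set.Icc (y₀ - 1 - Rm) (y₀ + 1 + Rm)) ×ˢ (Set.Icc (y₀ - 1) (y₀ + 1)) with hK2def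
    have hK2 : IsCompact K2 := isCompact_Icc.prod isCompact_Icc
    have hucS := hK2.uniformContinuousOn_of_continuous hS.continuousOn
    rw [Metric.uniformContinuousOn_iff] at hucS
    obtain ⟨δ, hδ0, hδ⟩ := hucS ε hε
    refine ⟨min δ 1, by positivity, fun y hy => ?_⟩
    rw [Real.dist_eq] at hy
    have hy1 : |y - y₀| < 1 := lt_of_lt_of_le hy (min_le_right _ _)
    have hyδ : |y - y₀| < δ := lt_of_lt_of_le hy (min_le_left _ _)
    rw [abs_lt] at hy1
    obtain ⟨z₀, hz₀R, hz₀⟩ := hmin y₀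
    obtain ⟨zy, hzyR, hzy⟩ := hmin y
    rw [abs_le] at hz₀R hzyR
    have hmem1 : (z₀, y) ∈ K2 :=
      ⟨⟨by linarith [hz₀R.1], by linarith [hz₀R.2]⟩, ⟨by linarith, by linarith⟩⟩
    have hmem2 : (z₀, y₀) ∈ K2 :=
      ⟨⟨by linarith [hz₀R.1], by linarith [hz₀R.2]⟩, ⟨by linarith, by linarith⟩⟩
    have hmem3 : (zy, y) ∈ K2 :=
      ⟨⟨by linarith [hzyR.1], by linarith [hzyR.2]⟩, ⟨by linarith, by linarith⟩⟩
    have hmem4 : (zy, y₀) ∈ K2 :=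
      ⟨⟨by linarith [hzyR.1], by linarith [hzyR.2]⟩, ⟨by linarith, by linarith⟩⟩
    have hd12 : dist ((z₀, y) : ℝ × ℝ) (z₀, y₀) < δ := by
      rw [Prod.dist_eq]
      simp only [dist_self]
      rw [Real.dist_eq]
      exact max_lt hδ0 hyδ
    have hd34 : dist ((zy, y₀) : ℝ × ℝ) (zy, y) < δ := by
      rw [Prod.dist_eq]
      simp only [dist_self]
      rw [Real.dist_eq, abs_sub_comm]
      exact max_lt hδ0 hyδ
    have e1 : |S z₀ y - S z₀ y₀| < ε := by
      have := hδ _ hmem1 _ hmem2 hd12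
      rwa [Real.dist_eq] at this
    have e2 : |S zy y₀ - S zy y| < ε := by
      have := hδ _ hmem4 _ hmem3 hd34
      rwa [Real.dist_eq] at this
    rw [abs_lt] at e1 e2
    have q1 : u y - u y₀ ≤ S z₀ y - S z₀ y₀ := by
      have := hUle z₀ y
      have := hmin_eq y₀ z₀ hz₀
      linarith
    have q2 : u y₀ - u y ≤ S zy y₀ - S zy y := by
      have := hUle zy y₀
      have := hmin_eq y zy hzy
      linarith
    rw [Real.dist_eq, abs_lt]
    constructor <;> linarith [e1.1, e1.2, e2.1, e2.2]
  -- maximizers exist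
  have hmax : ∀ x : ℝ, ∃ y : ℝ, ∀ z, u z - S x z ≤ u y - S x y := by
    intro x
    obtain ⟨R2, hR2⟩ := hco (Mv + A0 - (u x - S x x) + 1)
    set R : ℝ := |R2| with hR
    have hR0' : 0 ≤ R := abs_nonneg R2
    have hK : IsCompact (Set.Icc (x - R) (x + R)) := isCompact_Icc
    have hxK : x ∈ Set.Icc (x - R) (x + R) := ⟨by linarith, by linarith⟩
    obtain ⟨y, hy, hymax⟩ := hK.exists_isMaxOn ⟨x, hxK⟩
      ((huc.sub (hSy x)).continuousOn)
    refine ⟨y, fun z => ?_⟩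
    rcases le_or_gt |x - z| R with hz | hz
    · refine hymax ?_
      rw [abs_sub_le_iff] at hz
      exact ⟨by linarith [hz.1], by linarith [hz.2]⟩
    · have h1 : Mv + A0 - (u x - S x x) + 1 ≤ S x z := by
        refine hR2 x z (le_trans (le_abs_self R2) ?_)
        rw [hR] at hz; exact hz.le
      have h2 := hUub z
      have h3 : u x - S x x ≤ u y - S x y := hymax hxK
      linarith
  -- monotonicity of maximizers
  have hmono : ∀ x₁ x₂ y₁ y₂ : ℝ, (∀ z, u z - S x₁ z ≤ u y₁ - S x₁ y₁) →
      (∀ z, u z - S x₂ z ≤ u y₂ - S x₂ y₂) → x₁ < x₂ → y₁ ≤ y₂ := by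
    intro x₁ x₂ y₁ y₂ h1 h2 hx
    by_contra hlt
    push_neg at hlt
    have hnc' := hnc x₁ x₂ y₁ y₂ (mul_neg_of_neg_of_pos (by linarith) (by linarith))
    have a1 := h1 y₂
    have a2 := h2 y₁
    linarith
  -- minimizers give maximizers (surjectivity)
  have hPz : ∀ w z : ℝ, (∀ x, v z + S z w ≤ v x + S x w) →
      ∀ t, u t - S z t ≤ u w - S z w := by
    intro w z hz t
    have h1 : u w = v z + S z w := hmin_eq w z hz
    have h2 : u t ≤ v z + S z t := hUle z t
    linarith
  -- derivative in first variable
  have hdiff : Differentiable ℝ (fun p : ℝ × ℝ => S p.1 p.2) :=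
    hfer.1.differentiable one_ne_zero
  have hd1 : ∀ w s : ℝ, HasDerivAt (fun a => S a w) (deriv (fun a => S a w) s) s := by
    intro w s
    have hg : DifferentiableAt ℝ (fun a : ℝ => (a, w)) s :=
      differentiableAt_id.prodMk (differentiableAt_const w)
    have : DifferentiableAt ℝ (fun a : ℝ => S a w) s :=
      by have := DifferentiableAt.comp s (hdiff (s, w)) hg; exact this
    exact this.hasDerivAt
  -- uniqueness
  have huniq : ∀ x y₁ y₂ : ℝ, (∀ z, u z - S x z ≤ u y₁ - S x y₁) →
      (∀ z, u z - S x z ≤ u y₂ - S x y₂) → y₁ = y₂ := by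
    have hcore : ∀ x y₁ y₂ : ℝ, (∀ z, u z - S x z ≤ u y₁ - S x y₁) →
        (∀ z, u z - S x z ≤ u y₂ - S x y₂) → y₁ < y₂ → False := by
      intro x y₁ y₂ h1 h2 hlt
      set w₁ : ℝ := y₁ + (y₂ - y₁) / 3 with hw1
      set w₂ : ℝ := y₁ + 2 * (y₂ - y₁) / 3 with hw2
      have hzx : ∀ w : ℝ, y₁ < w → w < y₂ → ∀ t, v x + S x w ≤ v t + S t w := by
        intro w ha hb
        obtain ⟨z, _, hz⟩ := hmin w
        have hPzw := hPz w z hz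
        have hzeq : z = x := by
          rcases lt_trichotomy z x with h | h | h
          · have := hmono z x w y₁ hPzw h1 h
            linarith
          · exact h
          · have := hmono x z y₂ w h2 hPzw h
            linarith
        rw [← hzeq]
        exact hz
      have hx1 := hzx w₁ (by rw [hw1]; linarith) (by rw [hw1]; linarith)
      have hx2 := hzx w₂ (by rw [hw2]; linarith) (by rw [hw2]; linarith)
      obtain ⟨C, hC0, hC⟩ := hv
      set φ : ℝ → ℝ := fun t =>
        (S (x + t) w₁ - S x w₁) + (S (x - t) w₂ - S x w₂) + C * t ^ 2 with hφ
      have hφ0 : φ 0 = 0 := by simp [hφ]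
      have hφnn : ∀ t, 0 ≤ φ t := by
        intro t
        have hsc := hC (x + t) (x - t) (1/2) ⟨by norm_num, by norm_num⟩
        have hmid : (1/2 : ℝ) * (x + t) + (1 - 1/2) * (x - t) = x := by ring
        rw [hmid] at hsc
        have habs : |(x + t) - (x - t)| ^ 2 = 4 * t ^ 2 := by rw [sq_abs]; ring
        rw [habs] at hsc
        have g1 := hx1 (x + t)
        have g2 := hx2 (x - t)
        simp only [hφ]
        nlinarith [hsc, g1, g2]
      have hlocmin : IsLocalMin φ 0 :=
        Filter.Eventually.of_forall (fun t => hφ0.le.trans (hφnn t))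
      set d₁ : ℝ := deriv (fun a => S a w₁) x with hd₁
      set d₂ : ℝ := deriv (fun a => S a w₂) x with hd₂
      have hD1 : HasDerivAt (fun t : ℝ => S (x + t) w₁) d₁ 0 := by
        have h0 : HasDerivAt (fun t : ℝ => x + t) 1 0 := (hasDerivAt_id 0).const_add x
        have hb : HasDerivAt (fun a => S a w₁) d₁ (x + 0) := by
          rw [add_zero]; exact hd1 w₁ x
        have hcomp := hb.comp 0 h0
        simpa [Function.comp_def] using hcomp
      have hD2 : HasDerivAt (fun t : ℝ => S (x - t) w₂) (d₂ * (-1)) 0 := by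
        have h0 : HasDerivAt (fun t : ℝ => x - t) (-1) 0 := (hasDerivAt_id 0).const_sub x
        have hb : HasDerivAt (fun a => S a w₂) d₂ (x - 0) := by
          rw [sub_zero]; exact hd1 w₂ x
        have hcomp := hb.comp 0 h0
        simpa [Function.comp_def] using hcomp
      have hDq : HasDerivAt (fun t : ℝ => C * t ^ 2) 0 0 := by
        have := (hasDerivAt_pow 2 (0:ℝ)).const_mul C
        simpa using this
      have hDφ : HasDerivAt φ (d₁ + d₂ * (-1) + 0) 0 :=
        ((hD1.sub_const (S x w₁)).add (hD2.sub_const (S x w₂))).add hDq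
      have hzero := hlocmin.hasDerivAt_eq_zero hDφ
      have hdd : d₁ = d₂ := by linarith [hzero]
      obtain ⟨h, hh⟩ := hfer.2.1 x
      have hweq : w₁ = w₂ := h.injective (by rw [hh w₁, hh w₂]; exact hdd)
      have : w₂ - w₁ = (y₂ - y₁) / 3 := by rw [hw1, hw2]; ring
      rw [hweq] at this
      simp at this
      linarith
    intro x y₁ y₂ h1 h2
    rcases lt_trichotomy y₁ y₂ with h | h | h
    · exact absurd (hcore x y₁ y₂ h1 h2 h) (not_false)
    · exact h
    · exact absurd (hcore x y₂ y₁ h2 h1 h) (not_false)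
  -- shift
  have hshift : ∀ x y : ℝ, (∀ z, u z - S x z ≤ u y - S x y) →
      ∀ z, u z - S (x + 1) z ≤ u (y + 1) - S (x + 1) (y + 1) := by
    intro x y h z
    have e1 : S (x + 1) z = S x (z - 1) := by
      have h' := hdp 1 x (z - 1)
      push_cast at h'
      rw [sub_add_cancel] at h'
      exact h' 
    have e2 : u z = u (z - 1) := by rw [← hup (z - 1), sub_add_cancel]
    have e3 : S (x + 1) (y + 1) = S x y := by
      have h' := hdp 1 x y
      push_cast at h'
      exact h'
    have e4 : u (y + 1) = u y := hup y
    rw [e1, e2, e3, e4]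
    exact h (z - 1)
  -- assemble
  choose σ hσ using hmax
  have hmonoσ : Monotone σ := by
    intro a b hab
    rcases eq_or_lt_of_le hab with rfl | h
    · exact le_refl _
    · exact hmono a b (σ a) (σ b) (hσ a) (hσ b) h
  have hsurjσ : Function.Surjective σ := by
    intro w
    obtain ⟨z, _, hz⟩ := hmin w
    exact ⟨z, (huniq z w (σ z) (hPz w z hz) (hσ z)).symm⟩
  exact ⟨σ, hσ, fun x y hy => huniq x y (σ x) hy (hσ x),
    hmonoσ.continuous_of_surjective hsurjσ, hmonoσ,
    fun x => (huniq (x + 1) (σ x + 1) (σ (x + 1)) (hshift x (σ x) (hσ x)) (hσ (x + 1))).symm⟩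
end

section
/- In dimension 1, under Hypotheses 1–3: let u = T⁻[v] with v 1-periodic semiconcave. Then u is non-differentiable at a point y if and only if the preimage (Σ₊[u])⁻¹(y) is a non-degenerate closed bounded interval. -/
open Filter Topology

section Aux

private lemma sigma_int_shift (σ : ℝ → ℝ) (hσdeg : ∀ x, σ (x + 1) = σ x + 1) :
    ∀ (n : ℤ) (x : ℝ), σ (x + n) = σ x + n := by
  have h1 : ∀ x : ℝ, σ (x - 1) = σ x - 1 := by
    intro x
    have := hσdeg (x - 1)
    simp only [sub_add_cancel] at this
    linarith
  intro n
  induction n using Int.induction_on with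
  | zero => simp
  | succ k ih =>
    intro x
    have h2 : (x : ℝ) + (((k : ℤ) + 1 : ℤ) : ℝ) = (x + ((k:ℤ) : ℝ)) + 1 := by push_cast; ring
    rw [h2, hσdeg, ih]
    push_cast; ring
  | pred k ih =>
    intro x
    have h2 : (x : ℝ) + (((-(k:ℤ) - 1 : ℤ)) : ℝ) = (x + ((-(k:ℤ) : ℤ) : ℝ)) - 1 := by
      push_cast; ring
    rw [h2, h1, ih]
    push_cast; ring

private lemma sigma_surj (σ : ℝ → ℝ) (hσcont : Continuous σ)
    (hσdeg : ∀ x, σ (x + 1) = σ x + 1) : Function.Surjective σ := by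
  intro t
  have hint := sigma_int_shift σ hσdeg
  set n : ℤ := ⌊t - σ 0⌋ with hn
  set m : ℤ := ⌈t - σ 0⌉ with hm
  have h1 : (n : ℝ) ≤ t - σ 0 := Int.floor_le _
  have h2 : t - σ 0 ≤ (m : ℝ) := Int.le_ceil _
  have hnm : (n : ℝ) ≤ (m : ℝ) := le_trans h1 h2
  have key := intermediate_value_Icc hnm (hσcont.continuousOn (s := Set.Icc (n:ℝ) (m:ℝ)))
  have hane : σ (n : ℝ) = σ 0 + n := by simpa using hint n 0
  have hbne : σ (m : ℝ) = σ 0 + m := by simpa using hint m 0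
  have ht : t ∈ Set.Icc (σ (n:ℝ)) (σ (m:ℝ)) := by
    rw [hane, hbne]; constructor <;> linarith
  obtain ⟨x, _, hx⟩ := key ht
  exact ⟨x, hx⟩

end Aux

/-- u = T⁻[v] is non-differentiable at y iff the fiber of the optimal forward
map over y is a non-degenerate closed bounded interval. -/
theorem nondiff_iff_fiber_interval (S : ℝ → ℝ → ℝ)
    (hS : Continuous fun p : ℝ × ℝ => S p.1 p.2)
    (hco : Coercive1 S) (hdp : DiagPeriodic1 S)
    (hlsc : LocallySemiconcave fun p : ℝ × ℝ => S p.1 p.2)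
    (hfer : Ferromagnetic1 S) (hnc : NonCrossing S)
    (v u σ : ℝ → ℝ) (hvp : Periodic1 v) (hv : Semiconcave1 v)
    (hu : u = Tminus S v)
    (hσmax : ∀ x z, u z - S x z ≤ u (σ x) - S x (σ x))
    (hσuniq : ∀ x y, (∀ z, u z - S x z ≤ u y - S x y) → y = σ x)
    (hσcont : Continuous σ) (hσmono : Monotone σ)
    (hσdeg : ∀ x, σ (x + 1) = σ x + 1) :
    ∀ y : ℝ, ¬ DifferentiableAt ℝ u y ↔
      ∃ a b : ℝ, a < b ∧ σ ⁻¹' {y} = Set.Icc a b := by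
  obtain ⟨hC1, _, hfer3⟩ := hfer
  set F : ℝ × ℝ → ℝ := fun p => S p.1 p.2 with hFdef
  have hdiffF : Differentiable ℝ F := hC1.differentiable one_ne_zero
  set D : ℝ → ℝ → ℝ := fun x t => fderiv ℝ F (x, t) ((0 : ℝ), (1 : ℝ)) with hDdef
  have hD : ∀ x t : ℝ, HasDerivAt (fun s => S x s) (D x t) t := by
    intro x t
    have h1 : HasDerivAt (fun s : ℝ => (x, s)) ((0 : ℝ), (1 : ℝ)) t :=
      (hasDerivAt_const t x).prodMk (hasDerivAt_id t)
    exact (hdiffF (x, t)).hasFDerivAt.comp_hasDerivAt t h1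
  have hDcont : Continuous (fun p : ℝ × ℝ => D p.1 p.2) :=
    (hC1.continuous_fderiv one_ne_zero).clm_apply continuous_const
  intro y
  constructor
  · -- non-differentiability implies nondegenerate fiber
    intro hnd
    by_contra hnot
    push_neg at hnot
    apply hnd
    -- the fiber is a singleton {a}
    obtain ⟨c, hc⟩ := sigma_surj σ hσcont hσdeg y
    set P : Set ℝ := σ ⁻¹' {y} with hPdef
    have hcP : c ∈ P := by simpa [hPdef] using hc
    have hPne : P.Nonempty := ⟨c, hcP⟩
    have hPcl : IsClosed P := isClosed_singleton.preimage hσcont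
    have hint := sigma_int_shift σ hσdeg
    have hPbd : ∀ x ∈ P, c - 1 ≤ x ∧ x ≤ c + 1 := by
      intro x hx
      have hx' : σ x = y := hx
      constructor
      · by_contra h; push_neg at h
        have h2 : σ (x + 1) ≤ σ c := hσmono (by linarith)
        rw [hσdeg, hx', hc] at h2; linarith
      · by_contra h; push_neg at h
        have h2 : σ (c + 1) ≤ σ x := hσmono (by linarith)
        rw [hσdeg, hx', hc] at h2; linarith
    have hbb : BddBelow P := ⟨c - 1, fun x hx => (hPbd x hx).1⟩
    have hba : BddAbove P := ⟨c + 1, fun x hx => (hPbd x hx).2⟩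
    set a := sInf P with hadef
    set b := sSup P with hbdef
    have haP : a ∈ P := hPcl.csInf_mem hPne hbb
    have hbP : b ∈ P := hPcl.csSup_mem hPne hba
    have hab : a ≤ b := csInf_le_csSup hPne hbb hba
    have hPIcc : P = Set.Icc a b := by
      apply Set.Subset.antisymm
      · intro x hx
        exact ⟨csInf_le hbb hx, le_csSup hba hx⟩
      · intro t ht
        have h1 : σ a ≤ σ t := hσmono ht.1
        have h2 : σ t ≤ σ b := hσmono ht.2
        have ha' : σ a = y := haP
        have hb' : σ b = y := hbP
        show σ t = y
        rw [ha'] at h1; rw [hb'] at h2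
        linarith
    have haeqb : a = b := by
      by_contra h
      exact hnot a b (lt_of_le_of_ne hab h) hPIcc
    -- fiber = {a}
    have hay : σ a = y := haP
    have huniqf : ∀ x, σ x = y → x = a := by
      intro x hx
      have : x ∈ P := hx
      rw [hPIcc, ← haeqb] at this
      exact le_antisymm this.2 this.1
    -- differentiability at y with derivative D a y
    have hder : HasDerivAt u (D a y) y := by
      rw [hasDerivAt_iff_isLittleO, Asymptotics.isLittleO_iff]
      intro ε hε
      have h1 : ∀ᶠ z in 𝓝 y, |S a z - S a y - (z - y) * D a y| ≤ ε / 2 * |z - y| := by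
        have h0 := Asymptotics.isLittleO_iff.mp (hasDerivAt_iff_isLittleO.mp (hD a y))
          (half_pos hε)
        simpa [Real.norm_eq_abs, smul_eq_mul] using h0
      have hc2 : ContinuousAt (fun p : ℝ × ℝ => D p.1 p.2) (a, y) := hDcont.continuousAt
      rw [Metric.continuousAt_iff] at hc2
      obtain ⟨δ, hδpos, hδ⟩ := hc2 (ε / 2) (half_pos hε)
      have hlt1 : y < σ (a + δ / 2) := by
        have hle : σ a ≤ σ (a + δ / 2) := hσmono (by linarith)
        rcases eq_or_lt_of_le hle with h | h
        · exfalso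
          have habs : a + δ / 2 = a := huniqf _ (by rw [← h, hay])
          linarith
        · rw [hay] at h; exact h
      have hlt2 : σ (a - δ / 2) < y := by
        have hle : σ (a - δ / 2) ≤ σ a := hσmono (by linarith)
        rcases eq_or_lt_of_le hle with h | h
        · exfalso
          have habs : a - δ / 2 = a := huniqf _ (by rw [h, hay])
          linarith
        · rw [hay] at h; exact h
      filter_upwards [h1, Ioo_mem_nhds hlt2 hlt1, Metric.ball_mem_nhds y hδpos]
        with z hz1 hz2 hz3
      rw [Real.norm_eq_abs, Real.norm_eq_abs, smul_eq_mul]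
      rcases eq_or_ne z y with hzy | hzy
      · simp [hzy]
      -- choose a preimage of z under σ
      obtain ⟨w, hw⟩ := sigma_surj σ hσcont hσdeg z
      have hwl : a - δ / 2 < w := by
        by_contra h; push_neg at h
        have h2 : σ w ≤ σ (a - δ / 2) := hσmono h
        rw [hw] at h2
        exact absurd hz2.1 (not_lt.mpr h2)
      have hwr : w < a + δ / 2 := by
        by_contra h; push_neg at h
        have h2 : σ (a + δ / 2) ≤ σ w := hσmono h
        rw [hw] at h2
        exact absurd hz2.2 (not_lt.mpr h2)
      have hwd : dist w a < δ := by
        rw [Real.dist_eq, abs_lt]; constructor <;> linarith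
      have hzyd : |z - y| < δ := by
        have := hz3; rw [Metric.mem_ball, Real.dist_eq] at this; exact this
      have hScont : ∀ x : ℝ, Continuous (fun s => S x s) := by
        intro x
        exact hS.comp (Continuous.prodMk_right x)
      -- mean value theorem, both orders
      have hMVT : ∃ ξ : ℝ, S w z - S w y = D w ξ * (z - y) ∧ dist ξ y < δ := by
        rcases lt_or_gt_of_ne hzy with h | h
        · -- z < y
          obtain ⟨ξ, hξmem, hξeq⟩ := exists_hasDerivAt_eq_slope (fun s => S w s)
            (fun t => D w t) h ((hScont w).continuousOn) (fun t _ => hD w t)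
          refine ⟨ξ, ?_, ?_⟩
          · have hne : y - z ≠ 0 := by intro h0; apply hzy; linarith
            field_simp at hξeq
            nlinarith [hξeq]
          · rw [Real.dist_eq, abs_lt]
            constructor
            · have : -(δ) < z - y := by
                have := abs_lt.mp hzyd; linarith [this.1]
              linarith [hξmem.1]
            · linarith [hξmem.2]
        · -- y < z
          obtain ⟨ξ, hξmem, hξeq⟩ := exists_hasDerivAt_eq_slope (fun s => S w s)
            (fun t => D w t) h ((hScont w).continuousOn) (fun t _ => hD w t)
          refine ⟨ξ, ?_, ?_⟩
          · have hne : z - y ≠ 0 := sub_ne_zero.mpr hzy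
            field_simp at hξeq
            nlinarith [hξeq]
          · rw [Real.dist_eq, abs_lt]
            constructor
            · linarith [hξmem.1]
            · have : z - y < δ := by
                have := abs_lt.mp hzyd; linarith [this.2]
              linarith [hξmem.2]
      obtain ⟨ξ, hkey, hξd⟩ := hMVT
      have hDclose : |D w ξ - D a y| < ε / 2 := by
        have hdist : dist ((w, ξ) : ℝ × ℝ) ((a, y) : ℝ × ℝ) < δ := by
          rw [Prod.dist_eq]
          exact max_lt hwd hξd
        have := hδ hdist
        rwa [Real.dist_eq] at this
      -- the two support inequalities
      have hupper : u z - u y ≤ S a z - S a y := by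
        have := hσmax a z
        rw [hay] at this
        linarith
      have hlower : S w z - S w y ≤ u z - u y := by
        have := hσmax w y
        rw [hw] at this
        linarith
      -- combine
      have hAbound : |S w z - S w y - (z - y) * D a y| ≤ ε / 2 * |z - y| := by
        have : S w z - S w y - (z - y) * D a y = (D w ξ - D a y) * (z - y) := by
          rw [hkey]; ring
        rw [this, abs_mul]
        exact mul_le_mul_of_nonneg_right (le_of_lt hDclose) (abs_nonneg _)
      have hA := abs_le.mp hAbound
      have hB := abs_le.mp hz1
      have hhalf : ε / 2 * |z - y| ≤ ε * |z - y| :=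
        mul_le_mul_of_nonneg_right (by linarith) (abs_nonneg _)
      rw [abs_le]
      constructor
      · linarith [hA.1]
      · linarith [hB.2]
    exact hder.differentiableAt
  · -- nondegenerate fiber implies non-differentiability
    rintro ⟨a, b, hab, hIcc⟩ hdiff
    have haP : a ∈ σ ⁻¹' {y} := by
      rw [hIcc]; exact ⟨le_refl a, le_of_lt hab⟩
    have hbP : b ∈ σ ⁻¹' {y} := by
      rw [hIcc]; exact ⟨le_of_lt hab, le_refl b⟩
    have hay : σ a = y := haP
    have hby : σ b = y := hbP
    have hsupport : ∀ x : ℝ, σ x = y → deriv u y = D x y := by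
      intro x hx
      have hmax : IsLocalMax (fun z => u z - S x z) y := by
        apply Filter.Eventually.of_forall
        intro z
        have := hσmax x z
        rw [hx] at this
        simpa using this
      have hfd : HasDerivAt (fun z => u z - S x z) (deriv u y - D x y) y :=
        hdiff.hasDerivAt.sub (hD x y)
      have h0 : deriv (fun z => u z - S x z) y = 0 := hmax.deriv_eq_zero
      rw [hfd.deriv] at h0
      linarith
    have hda : deriv u y = D a y := hsupport a hay
    have hdb : deriv u y = D b y := hsupport b hby
    obtain ⟨h, hh⟩ := hfer3 y
    have hha : h a = D a y := by rw [hh a, (hD a y).deriv]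
    have hhb : h b = D b y := by rw [hh b, (hD b y).deriv]
    have : h a = h b := by rw [hha, hhb, ← hda, ← hdb]
    exact absurd (h.injective this) (ne_of_lt hab)
end

section
/- In dimension 1, under Hypotheses 1–3: let u = T⁻[v] with v 1-periodic semiconcave. If v is non-differentiable at x, then u is non-differentiable at Σ₊[u](x). In particular, if u is a discrete weak K.A.M. solution (T⁻[u] = u + S̄), then the set Sing(u) of non-differentiability points of u is forward invariant under Σ₊[u]. -/
open Filter Topology

/-- σ is the (single-valued) optimal forward map of u. -/
def FwdMap (S : ℝ → ℝ → ℝ) (u σ : ℝ → ℝ) : Prop :=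
  (∀ x z, u z - S x z ≤ u (σ x) - S x (σ x)) ∧
  (∀ x y, (∀ z, u z - S x z ≤ u y - S x y) → y = σ x)

open Asymptotics in
/-- If `v + F` has a global minimum at `x'`, `F` is differentiable at `x'`, and `v`
satisfies a one-sided midpoint semiconcavity estimate near `x'`, then `v` is
differentiable at `x'`. -/
lemma hasDerivAt_of_min_sc {v F : ℝ → ℝ} {x' d C : ℝ}
    (hF : HasDerivAt F d x')
    (hlow : ∀ t, v x' + F x' ≤ v t + F t)
    (hup : ∀ᶠ t in 𝓝 x', v t + v (2*x' - t) - 2 * v x' ≤ C * (t - x')^2) :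
    HasDerivAt v (-d) x' := by
  rw [hasDerivAt_iff_isLittleO]
  have he : (fun t => F t - F x' - (t - x') • d) =o[𝓝 x'] fun t => t - x' :=
    hasDerivAt_iff_isLittleO.mp hF
  rw [Asymptotics.isLittleO_iff]
  intro ε hε
  have hrefl : Tendsto (fun t : ℝ => 2*x' - t) (𝓝 x') (𝓝 x') := by
    have h1 : Tendsto (fun t : ℝ => 2*x' - t) (𝓝 x') (𝓝 (2*x' - x')) :=
      tendsto_const_nhds.sub tendsto_id
    have : 2*x' - x' = x' := by ring
    rwa [this] at h1
  have ev1 := (Asymptotics.isLittleO_iff.mp he) (half_pos hε)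
  have ev2 := hrefl.eventually ((Asymptotics.isLittleO_iff.mp he) (half_pos hε))
  have hC1 : (0:ℝ) < ε/2/(|C|+1) := by positivity
  have ev3 : ∀ᶠ t in 𝓝 x', |t - x'| < ε/2/(|C|+1) := eventually_abs_sub_lt x' hC1
  filter_upwards [ev1, ev2, ev3, hup] with t h1 h2 h3 h4
  simp only [smul_eq_mul, Real.norm_eq_abs] at h1 h2 ⊢
  have habs : |2*x' - t - x'| = |t - x'| := by
    have : 2*x' - t - x' = -(t - x') := by ring
    rw [this, abs_neg]
  rw [habs] at h2
  set e1 := F t - F x' - (t - x') * d with he1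
  set e2 := F (2*x' - t) - F x' - (2*x' - t - x') * d with he2
  -- lower bound
  have hl : -(ε/2 * |t - x'|) ≤ v t - v x' - (t - x') * (-d) := by
    have h5 := hlow t
    have h6 : -e1 ≤ v t - v x' + (t - x') * d := by rw [he1]; linarith
    have h7 : -(ε/2 * |t - x'|) ≤ -e1 := by
      have := neg_abs_le e1
      linarith [abs_le.mp h1]
    have h8 : v t - v x' - (t - x') * (-d) = v t - v x' + (t - x') * d := by ring
    rw [h8]; linarith
  -- upper bound
  have hu : v t - v x' - (t - x') * (-d) ≤ ε * |t - x'| := by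
    have h5 := hlow (2*x' - t)
    have h6 : v t - v x' + (t - x') * d ≤ e2 + C * (t - x')^2 := by
      rw [he2]; nlinarith [h4, h5]
    have h7 : C * (t - x')^2 ≤ ε/2 * |t - x'| := by
      have hC : C ≤ |C| := le_abs_self C
      have h9 : (t - x')^2 = |t - x'| * |t - x'| := by rw [← sq_abs]; ring
      have h10 : 0 ≤ |t - x'| := abs_nonneg _
      have h11 : |t - x'| ≤ ε/2/(|C|+1) := le_of_lt h3
      have h12 : 0 ≤ |C| + 1 := by positivity
      calc C * (t - x')^2 ≤ (|C| + 1) * ((t - x')^2) := by nlinarith [sq_nonneg (t - x')]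
        _ = (|C| + 1) * |t - x'| * |t - x'| := by rw [h9]; ring
        _ ≤ (|C| + 1) * (ε/2/(|C|+1)) * |t - x'| := by
              have := mul_le_mul_of_nonneg_left h11 h12
              nlinarith
        _ = ε/2 * |t - x'| := by field_simp
    have h8 : e2 ≤ ε/2 * |t - x'| := le_trans (le_abs_self _) h2
    have h9 : v t - v x' - (t - x') * (-d) = v t - v x' + (t - x') * d := by ring
    rw [h9]; linarith
  rw [abs_le]
  constructor
  · have : -(ε * |t - x'|) ≤ -(ε/2 * |t - x'|) := by nlinarith [abs_nonneg (t - x')]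
    linarith
  · exact hu


/-- Core propagation lemma. -/
lemma core_prop {S : ℝ → ℝ → ℝ}
    (hSd : Differentiable ℝ (fun p : ℝ × ℝ => S p.1 p.2))
    (hfer₂ : ∀ y : ℝ, ∃ h : ℝ ≃ₜ ℝ, ∀ x, h x = deriv (fun t => S x t) y)
    {v w σ : ℝ → ℝ}
    (hw : ∀ y, w y = ⨅ t, (v t + S t y))
    (hbdd : ∀ z, BddBelow (Set.range fun t => v t + S t z))
    (hmin : ∀ z, ∃ t, ∀ s, v t + S t z ≤ v s + S s z)
    (hsc : ∀ p : ℝ, ∃ C : ℝ, ∀ᶠ t in 𝓝 p, v t + v (2*p - t) - 2 * v p ≤ C * (t - p)^2)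
    (hσ : ∀ x z, w z - S x z ≤ w (σ x) - S x (σ x))
    (x : ℝ) (hvx : ¬ DifferentiableAt ℝ v x) :
    ¬ DifferentiableAt ℝ w (σ x) := by
  intro hwd
  set y₀ := σ x with hy₀
  obtain ⟨x', hx'⟩ := hmin y₀
  have hle : ∀ z t, w z ≤ v t + S t z := by
    intro z t
    rw [hw z]
    exact ciInf_le (hbdd z) t
  have heq : w y₀ = v x' + S x' y₀ := by
    refine le_antisymm (hle y₀ x') ?_
    rw [hw y₀]
    exact le_ciInf hx'
  -- differentiability of slices
  have hd1 : ∀ y : ℝ, Differentiable ℝ (fun t => S t y) := fun y =>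
    hSd.comp (differentiable_id.prodMk (differentiable_const y))
  have hd2 : ∀ t : ℝ, Differentiable ℝ (fun z => S t z) := fun t =>
    hSd.comp ((differentiable_const t).prodMk differentiable_id)
  -- v is differentiable at x'
  obtain ⟨C, hC⟩ := hsc x'
  have hF : HasDerivAt (fun t => S t y₀) (deriv (fun t => S t y₀) x') x' :=
    (hd1 y₀ x').hasDerivAt
  have hv' : HasDerivAt v (-(deriv (fun t => S t y₀) x')) x' :=
    hasDerivAt_of_min_sc hF hx' hC
  have hne : x' ≠ x := by
    intro h
    exact hvx (h ▸ hv'.differentiableAt)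
  -- Fermat at y₀
  have fermat : ∀ t : ℝ, (∀ z, w z - S t z ≤ w y₀ - S t y₀) →
      deriv w y₀ = deriv (fun z => S t z) y₀ := by
    intro t hmax
    have hg : HasDerivAt (fun z => w z - S t z)
        (deriv w y₀ - deriv (fun z => S t z) y₀) y₀ :=
      hwd.hasDerivAt.sub (hd2 t y₀).hasDerivAt
    have hloc : IsLocalMax (fun z => w z - S t z) y₀ :=
      Filter.Eventually.of_forall hmax
    have h0 := hloc.hasDerivAt_eq_zero hg
    linarith
  have e1 : deriv w y₀ = deriv (fun z => S x z) y₀ := fermat x (fun z => hσ x z)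
  have e2 : deriv w y₀ = deriv (fun z => S x' z) y₀ := by
    refine fermat x' (fun z => ?_)
    have := hle z x'
    linarith [heq.ge, heq.le]
  obtain ⟨h, hh⟩ := hfer₂ y₀
  have hxx' : h x = h x' := by rw [hh, hh, ← e1, ← e2]
  exact hne (h.injective hxx').symm


/-- A semiconcave function (linear modulus) on ℝ is continuous. -/
lemma semiconcave_continuous {v : ℝ → ℝ} {C : ℝ}
    (hC : ∀ x y θ : ℝ, θ ∈ Set.Icc (0:ℝ) 1 →
      θ * v x + (1 - θ) * v y - v (θ * x + (1 - θ) * y) ≤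
        C / 2 * θ * (1 - θ) * |x - y| ^ 2) :
    Continuous v := by
  set g : ℝ → ℝ := fun t => v t - C / 2 * t ^ 2 with hg
  have hconc : ConcaveOn ℝ Set.univ g := by
    refine ⟨convex_univ, ?_⟩
    intro p _ q _ a b ha hb hab
    have hb' : b = 1 - a := by linarith
    have key := hC p q a ⟨ha, by linarith⟩
    have habs : |p - q| ^ 2 = (p - q) ^ 2 := sq_abs _
    rw [habs] at key
    simp only [smul_eq_mul, hg, hb']
    have harg : a * p + (1 - a) * q = a • p + (1 - a) • q := by simp
    nlinarith [key, sq_nonneg (p - q)]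
  have hgc : Continuous g := by
    rw [← continuousOn_univ]
    exact hconc.continuousOn isOpen_univ
  have : v = fun t => g t + C / 2 * t ^ 2 := by
    funext t; simp [hg]
  rw [this]
  exact hgc.add (continuous_const.mul (continuous_pow 2))



/-- A periodic continuous function attains a global minimum. -/
lemma periodic_global_min {v : ℝ → ℝ} (hv : Continuous v) (hper : ∀ x, v (x + 1) = v x) :
    ∃ t₀, ∀ x, v t₀ ≤ v x := by
  obtain ⟨t₀, ht₀K, hmin⟩ := isCompact_Icc.exists_isMinOn (s := Set.Icc (0:ℝ) 1)
    ⟨0, by norm_num⟩ hv.continuousOn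
  refine ⟨t₀, fun x => ?_⟩
  have hper' : Function.Periodic v 1 := hper
  have h1 : v (x - (⌊x⌋ : ℝ) * 1) = v x := hper'.sub_int_mul_eq ⌊x⌋
  have h2 : x - (⌊x⌋ : ℝ) * 1 ∈ Set.Icc (0:ℝ) 1 := by
    constructor
    · have := Int.floor_le x; linarith
    · have := Int.lt_floor_add_one x; linarith
  calc v t₀ ≤ v (x - (⌊x⌋ : ℝ) * 1) := hmin h2
    _ = v x := h1

/-- Under coercivity, diagonal periodicity and continuity, S is bounded below. -/
lemma S_bddBelow {S : ℝ → ℝ → ℝ} (hS : Continuous fun p : ℝ × ℝ => S p.1 p.2)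
    (hco : ∀ M : ℝ, ∃ R : ℝ, ∀ x y : ℝ, R ≤ |x - y| → M ≤ S x y)
    (hdp : ∀ (m : ℤ) (x y : ℝ), S (x + m) (y + m) = S x y) :
    ∃ m, ∀ x y, m ≤ S x y := by
  obtain ⟨R, hR⟩ := hco 0
  set R' : ℝ := |R| + 1 with hR'
  have hR'0 : 0 ≤ R' := by positivity
  have hKc : IsCompact ((Set.Icc (0:ℝ) 1) ×ˢ (Set.Icc (-(R'+1)) (R'+2))) :=
    isCompact_Icc.prod isCompact_Icc
  obtain ⟨p, hpK, hmin⟩ := hKc.exists_isMinOn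
    ⟨(0, 0), by constructor <;> constructor <;> simp <;> linarith⟩ hS.continuousOn
  refine ⟨min (S p.1 p.2) 0, fun x y => ?_⟩
  by_cases h : R' ≤ |x - y|
  · have : R ≤ |x - y| := le_trans (le_trans (le_abs_self R) (by linarith)) h
    exact le_trans (min_le_right _ _) (hR x y this)
  · push_neg at h
    have hfl1 := Int.floor_le x
    have hfl2 := Int.lt_floor_add_one x
    have hxy : S x y = S (x - (⌊x⌋:ℝ)) (y - (⌊x⌋:ℝ)) := by
      have := hdp ⌊x⌋ (x - (⌊x⌋:ℝ)) (y - (⌊x⌋:ℝ))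
      simpa using this
    have hx1 : x - ((⌊x⌋:ℤ):ℝ) ∈ Set.Icc (0:ℝ) 1 :=
      Set.mem_Icc.mpr ⟨by linarith, by linarith⟩
    have habs := abs_lt.mp h
    have hy1 : y - ((⌊x⌋:ℤ):ℝ) ∈ Set.Icc (-(R'+1)) (R'+2) :=
      Set.mem_Icc.mpr ⟨by nlinarith [habs.1, habs.2], by nlinarith [habs.1, habs.2]⟩
    have : S p.1 p.2 ≤ S (x - (⌊x⌋:ℝ)) (y - (⌊x⌋:ℝ)) := hmin (Set.mk_mem_prod hx1 hy1)
    rw [hxy]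
    exact le_trans (min_le_left _ _) this

/-- Existence of a minimizer of `t ↦ v t + S t z` for continuous periodic `v`. -/
lemma exists_forward_min {S : ℝ → ℝ → ℝ} (hS : Continuous fun p : ℝ × ℝ => S p.1 p.2)
    (hco : ∀ M : ℝ, ∃ R : ℝ, ∀ x y : ℝ, R ≤ |x - y| → M ≤ S x y)
    {v : ℝ → ℝ} (hv : Continuous v) (hlb : ∃ t₀, ∀ x, v t₀ ≤ v x) (z : ℝ) :
    ∃ t, ∀ s, v t + S t z ≤ v s + S s z := by
  obtain ⟨t₀, ht₀⟩ := hlb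
  have hfc : Continuous fun t => v t + S t z :=
    hv.add (hS.comp (continuous_id.prodMk continuous_const))
  obtain ⟨R, hR⟩ := hco (v z + S z z + 1 - v t₀)
  set R' : ℝ := |R| + 1 with hR'
  have hzK : z ∈ Set.Icc (z - R') (z + R') := by
    constructor <;> [linarith [abs_nonneg R]; linarith [abs_nonneg R]]
  obtain ⟨t₁, ht₁K, hmin⟩ := isCompact_Icc.exists_isMinOn ⟨z, hzK⟩ hfc.continuousOn
  refine ⟨t₁, fun s => ?_⟩
  by_cases hs : s ∈ Set.Icc (z - R') (z + R')
  · exact hmin hs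
  · have hsz : R ≤ |s - z| := by
      simp only [Set.mem_Icc, not_and_or, not_le] at hs
      rcases hs with hs | hs
      · rw [abs_sub_comm]; rw [abs_of_pos (by linarith [abs_nonneg R])]
        · linarith [le_abs_self R]
      · rw [abs_of_pos (by linarith [abs_nonneg R])]
        linarith [le_abs_self R]
    have h1 : v z + S z z + 1 - v t₀ ≤ S s z := hR s z hsz
    have h2 : v t₁ + S t₁ z ≤ v z + S z z := hmin hzK
    have := ht₀ s
    linarith


/-- The optimal forward map propagates singularities (main theorem). -/
theorem singularities_propagate (S : ℝ → ℝ → ℝ)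
    (hS : Continuous fun p : ℝ × ℝ => S p.1 p.2)
    (hco : Coercive1 S) (hdp : DiagPeriodic1 S)
    (hlsc : LocallySemiconcave fun p : ℝ × ℝ => S p.1 p.2)
    (hfer : Ferromagnetic1 S) (hnc : NonCrossing S) :
    (∀ v u σ : ℝ → ℝ, Periodic1 v → Semiconcave1 v → u = Tminus S v →
      FwdMap S u σ → ∀ x, ¬ DifferentiableAt ℝ v x → ¬ DifferentiableAt ℝ u (σ x)) ∧
    (∀ (u σ : ℝ → ℝ) (Sbar : ℝ), Continuous u → Periodic1 u →
      (∀ y, Tminus S u y = u y + Sbar) → FwdMap S u σ →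
      ∀ x, ¬ DifferentiableAt ℝ u x → ¬ DifferentiableAt ℝ u (σ x)) := by
  have hSd : Differentiable ℝ (fun p : ℝ × ℝ => S p.1 p.2) := hfer.1.differentiable one_ne_zero
  have hfer₂ := hfer.2.2
  obtain ⟨mS, hmS⟩ := S_bddBelow hS hco hdp
  constructor
  · -- Part 1
    intro v u σ hper hsc1 hEq hFwd x hvx
    obtain ⟨C, hC0, hC⟩ := hsc1
    have hvcont : Continuous v := semiconcave_continuous hC
    obtain ⟨t₀, ht₀⟩ := periodic_global_min hvcont hper
    have hbdd : ∀ z, BddBelow (Set.range fun t => v t + S t z) := fun z =>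
      ⟨v t₀ + mS, by rintro _ ⟨t, rfl⟩; exact add_le_add (ht₀ t) (hmS t z)⟩
    have hmin := fun z => exists_forward_min hS hco hvcont ⟨t₀, ht₀⟩ z
    have hw : ∀ y, u y = ⨅ t, (v t + S t y) := fun y => by rw [hEq]; rfl
    have hscv : ∀ p : ℝ, ∃ C' : ℝ, ∀ᶠ t in 𝓝 p,
        v t + v (2*p - t) - 2*v p ≤ C' * (t - p)^2 := by
      intro p
      refine ⟨C, Filter.Eventually.of_forall fun t => ?_⟩
      have key := hC t (2*p - t) (1/2) ⟨by norm_num, by norm_num⟩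
      have harg : (1/2 : ℝ) * t + (1 - 1/2) * (2*p - t) = p := by ring
      rw [harg, sq_abs] at key
      nlinarith [key]
    exact core_prop hSd hfer₂ hw hbdd hmin hscv hFwd.1 x hvx
  · -- Part 2
    intro u σ Sbar hu hper hTu hFwd x hux
    obtain ⟨t₀, ht₀⟩ := periodic_global_min hu hper
    have hbdd : ∀ z, BddBelow (Set.range fun t => u t + S t z) := fun z =>
      ⟨u t₀ + mS, by rintro _ ⟨t, rfl⟩; exact add_le_add (ht₀ t) (hmS t z)⟩
    have hmin := fun z => exists_forward_min hS hco hu ⟨t₀, ht₀⟩ z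
    have hw : ∀ y, (fun y => u y + Sbar) y = ⨅ t, (u t + S t y) := fun y => (hTu y).symm
    have hub : ∀ z t, u z + Sbar ≤ u t + S t z := fun z t =>
      (hw z).trans_le (ciInf_le (hbdd z) t)
    have hscu : ∀ p : ℝ, ∃ C' : ℝ, ∀ᶠ t in 𝓝 p,
        u t + u (2*p - t) - 2*u p ≤ C' * (t - p)^2 := by
      intro p
      obtain ⟨x₀, hx₀⟩ := hmin p
      have heq : u p + Sbar = u x₀ + S x₀ p :=
        le_antisymm (hub p x₀) ((le_ciInf hx₀).trans_eq (hw p).symm)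
      obtain ⟨U, hU, hconv, C, hC0, hCsc⟩ := hlsc (x₀, p)
      have hc1 : ContinuousAt (fun t : ℝ => ((x₀:ℝ), t)) p :=
        (continuous_const.prodMk continuous_id).continuousAt
      have hc2 : ContinuousAt (fun t : ℝ => ((x₀:ℝ), 2*p - t)) p :=
        (continuous_const.prodMk (continuous_const.sub continuous_id)).continuousAt
      have hm1 : ∀ᶠ t in 𝓝 p, ((x₀:ℝ), t) ∈ U := hc1.eventually_mem hU
      have hm2 : ∀ᶠ t in 𝓝 p, ((x₀:ℝ), 2*p - t) ∈ U := by
        refine hc2.eventually_mem ?_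
        show U ∈ 𝓝 ((x₀:ℝ), 2*p - p)
        rw [show 2*p - p = p from by ring]
        exact hU
      refine ⟨C, ?_⟩
      filter_upwards [hm1, hm2] with t h1 h2
      have key := hCsc _ h1 _ h2 (1/2) ⟨by norm_num, by norm_num⟩
      have harg : ((1:ℝ)/2) • ((x₀:ℝ), t) + (1 - (1:ℝ)/2) • ((x₀:ℝ), 2*p - t)
          = ((x₀:ℝ), p) := by
        simp only [Prod.smul_mk, Prod.mk_add_mk, smul_eq_mul, Prod.mk.injEq]
        constructor <;> ring
      rw [harg] at key
      have hnorm : ‖((x₀:ℝ), t) - ((x₀:ℝ), 2*p - t)‖^2 = (2*t - 2*p)^2 := by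
        have hsub : ((x₀:ℝ), t) - ((x₀:ℝ), 2*p - t) = ((0:ℝ), 2*t - 2*p) := by
          simp only [Prod.mk_sub_mk, Prod.mk.injEq]
          constructor <;> ring
        rw [hsub]
        have : ‖((0:ℝ), 2*t - 2*p)‖ = |2*t - 2*p| := by
          rw [Prod.norm_def]
          simp [Real.norm_eq_abs]
        rw [this, sq_abs]
      rw [hnorm] at key
      simp only at key
      have hA : u t + Sbar ≤ u x₀ + S x₀ t := hub t x₀
      have hB : u (2*p - t) + Sbar ≤ u x₀ + S x₀ (2*p - t) := hub (2*p - t) x₀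
      nlinarith [key, hA, hB, heq]
    have hσw : ∀ x z, (fun y => u y + Sbar) z - S x z ≤
        (fun y => u y + Sbar) (σ x) - S x (σ x) := by
      intro a z
      have := hFwd.1 a z
      simp only
      linarith
    have hcore := core_prop hSd hfer₂ hw hbdd hmin hscu hσw x hux
    intro hd
    exact hcore (hd.add_const Sbar)
end

section
/- In dimension 1, under Hypotheses 1–3: let u ∈ T⁻(SC(𝕋)) be a sub-action (u(y)−u(x) ≤ S(x,y) − S̄ for all x,y). If {xₙ}_{n∈ℤ} is a u-calibrated sequence, i.e. u(x_{n+1}) − u(xₙ) = S(xₙ, x_{n+1}) − S̄ for all n, then x_{n+1} = Σ₊[u](xₙ) for every n. Consequently the rotation number ρ(Σ₊[u]) = lim_{n→∞}(xₙ − x₀)/n equals the rotation number of the calibrated sequence. -/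
open Filter Topology

/-- Calibrated sequences are orbits of the optimal forward map, and hence have
the same rotation number as Σ₊[u]. -/
theorem calibrated_is_forward_orbit (S : ℝ → ℝ → ℝ)
    (hS : Continuous fun p : ℝ × ℝ => S p.1 p.2)
    (hco : Coercive1 S) (hdp : DiagPeriodic1 S)
    (hlsc : LocallySemiconcave fun p : ℝ × ℝ => S p.1 p.2)
    (hfer : Ferromagnetic1 S) (hnc : NonCrossing S)
    (Sbar : ℝ) (u σ : ℝ → ℝ)
    (huim : ∃ v : ℝ → ℝ, Periodic1 v ∧ Semiconcave1 v ∧ u = Tminus S v)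
    (hsub : ∀ x y, u y - u x ≤ S x y - Sbar)
    (hσmax : ∀ x z, u z - S x z ≤ u (σ x) - S x (σ x))
    (hσuniq : ∀ x y, (∀ z, u z - S x z ≤ u y - S x y) → y = σ x)
    (x : ℤ → ℝ)
    (hcal : ∀ n : ℤ, u (x (n + 1)) - u (x n) = S (x n) (x (n + 1)) - Sbar) :
    (∀ n : ℤ, x (n + 1) = σ (x n)) ∧
    ∀ ρ : ℝ, Tendsto (fun n : ℕ => (σ^[n] (x 0) - x 0) / n) atTop (𝓝 ρ) →
      Tendsto (fun n : ℕ => (x (n : ℤ) - x 0) / n) atTop (𝓝 ρ) := by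
  have hstep : ∀ n : ℤ, x (n + 1) = σ (x n) := by
    intro n
    apply hσuniq
    intro z
    have h1 := hsub (x n) z
    have h2 := hcal n
    linarith
  refine ⟨hstep, ?_⟩
  have horb : ∀ n : ℕ, σ^[n] (x 0) = x (n : ℤ) := by
    intro n
    induction n with
    | zero => simp
    | succ k ih =>
      rw [Function.iterate_succ_apply', ih, ← hstep (k : ℤ)]
      norm_cast
  intro ρ hρ
  have : (fun n : ℕ => (σ^[n] (x 0) - x 0) / n) = fun n : ℕ => (x (n : ℤ) - x 0) / n := by
    funext n; rw [horb]
  rwa [this] at hρ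
end
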